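/- arXiv:2406.09955 — 2 statements merged into one kernel-verified Lean document; each statement's English description precedes it below -/
import Mathlib

section
/- Let Q be a bounded sublinear rate operator on ℬ and fix t ≥ 0. Then the sequence of operators ((I + (t/n)Q)^n)_{n∈ℕ} (n-fold composition of I + (t/n)Q with itself) is Cauchy with respect to the operator seminorm, and its limit e^{tQ} := lim_{n→∞} (I + (t/n)Q)^n is a sublinear transition operator. -/
open Filter Topology BoundedContinuousFunction ENNReal NNReal

/-- The space of (possibly nonlinear) operators on the Banach space `X →ᵇ ℝ`
of bounded (continuous, i.e. with `X` discrete: all) real-valued functions. -/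
abbrev Op (X : Type*) [TopologicalSpace X] :=
  BoundedContinuousFunction X ℝ → BoundedContinuousFunction X ℝ

/-- The operator seminorm `‖A‖ = sup {‖A f‖/‖f‖ : f ≠ 0}`, a value in `[0,∞]`. -/
noncomputable def opSemiNorm {X : Type*} [TopologicalSpace X] (A : Op X) : ℝ≥0∞ :=
  ⨆ (f : BoundedContinuousFunction X ℝ) (_ : f ≠ 0), (‖A f‖₊ : ℝ≥0∞) / (‖f‖₊ : ℝ≥0∞)

/-- The operator norm distance `d(A,B) = ‖A 0 − B 0‖∞ + ‖A − B‖`. -/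
noncomputable def opDist {X : Type*} [TopologicalSpace X] (A B : Op X) : ℝ≥0∞ :=
  (‖A 0 - B 0‖₊ : ℝ≥0∞) + opSemiNorm (A - B)

/-- Sublinear transition operator: (T1) positive homogeneity, (T2) subadditivity,
(T3) `T f ≤ sup f` pointwise. -/
def IsSublinearTransition {X : Type*} [TopologicalSpace X] (T : Op X) : Prop :=
  (∀ (c : ℝ), 0 ≤ c → ∀ f, T (c • f) = c • T f) ∧
  (∀ f g, ∀ x, T (f + g) x ≤ T f x + T g x) ∧
  (∀ f, ∀ x, T f x ≤ ⨆ y, f y)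

/-- Sublinear rate operator: (Q1) positive homogeneity, (Q2) subadditivity,
(Q3) constants map to zero, (Q4) positive maximum principle. -/
def IsSublinearRate {X : Type*} [TopologicalSpace X] (Q : Op X) : Prop :=
  (∀ (c : ℝ), 0 ≤ c → ∀ f, Q (c • f) = c • Q f) ∧
  (∀ f g, ∀ x, Q (f + g) x ≤ Q f x + Q g x) ∧
  (∀ (c : ℝ), Q (BoundedContinuousFunction.const X c) = 0) ∧
  (∀ f, ∀ x : X, (⨆ y, f y) = f x → 0 ≤ f x → Q f x ≤ 0)

/-- The Euler approximation `(I + (t/n) Q)^n` (n-fold composition). -/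
noncomputable def euler {X : Type*} [TopologicalSpace X] (Q : Op X) (t : ℝ) (n : ℕ) : Op X :=
  (fun f => f + (t / (n : ℝ)) • Q f)^[n]

/-- Uniform continuity of a semigroup `(S_t)_{t ≥ 0}`:
`‖S_s − S_t‖ → 0` as `s → t` (within `s ≥ 0`), for every `t ≥ 0`. -/
def IsUniformlyContinuousSG {X : Type*} [TopologicalSpace X] (S : ℝ → Op X) : Prop :=
  ∀ t : ℝ, 0 ≤ t →
    Tendsto (fun s => opSemiNorm (S s - S t)) (nhdsWithin t (Set.Ici 0)) (nhds 0)

/-- The indicator function `1_x` of the singleton `{x}`. -/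
noncomputable def indic {X : Type*} [TopologicalSpace X] [DiscreteTopology X] (x : X) :
    BoundedContinuousFunction X ℝ :=
  BoundedContinuousFunction.ofNormedAddCommGroup
    (Set.indicator {x} (fun _ => (1 : ℝ))) continuous_of_discreteTopology 1
    (by
      intro y
      classical
      rw [Set.indicator_apply]
      split_ifs <;> simp)

/-- Downward continuity (continuity from above) of an operator. -/
def DownwardContinuous {X : Type*} [TopologicalSpace X] (A : Op X) : Prop :=
  ∀ (f : ℕ → BoundedContinuousFunction X ℝ) (g : BoundedContinuousFunction X ℝ),
    (∀ n x, f (n + 1) x ≤ f n x) →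
    (∀ x, Tendsto (fun n => f n x) atTop (nhds (g x))) →
    ∀ x, Tendsto (fun n => A (f n) x) atTop (nhds (A g x))

noncomputable def stepOp {X : Type*} [TopologicalSpace X] (Q : Op X) (h : ℝ) : Op X :=
  fun f => f + h • Q f

section Aux
variable {X : Type*} [TopologicalSpace X]

lemma bcf_bddAbove (f : BoundedContinuousFunction X ℝ) : BddAbove (Set.range f) :=
  ⟨‖f‖, by rintro _ ⟨y, rfl⟩; exact (le_abs_self _).trans (f.norm_coe_le_norm y)⟩

lemma bcf_le_sup (f : BoundedContinuousFunction X ℝ) (x : X) : f x ≤ ⨆ y, f y :=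
  le_ciSup (bcf_bddAbove f) x

lemma bcf_apply_le_norm (f : BoundedContinuousFunction X ℝ) (x : X) : f x ≤ ‖f‖ :=
  (le_abs_self _).trans (f.norm_coe_le_norm x)

lemma bcf_sup_le_norm [Nonempty X] (f : BoundedContinuousFunction X ℝ) : (⨆ y, f y) ≤ ‖f‖ :=
  ciSup_le fun y => bcf_apply_le_norm f y

lemma indic_self [DiscreteTopology X] (x : X) : indic x x = 1 := by
  simp [indic, BoundedContinuousFunction.coe_ofNormedAddCommGroup]

lemma indic_ne [DiscreteTopology X] (x y : X) (h : y ≠ x) : indic x y = 0 := by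
  simp [indic, BoundedContinuousFunction.coe_ofNormedAddCommGroup, Set.indicator_apply, h]

lemma indic_norm_le [DiscreteTopology X] (x : X) : ‖indic x‖ ≤ 1 :=
  BoundedContinuousFunction.norm_ofNormedAddCommGroup_le _ zero_le_one _


-- generic transition lemmas
section Trans
variable {T S : Op X} (hT : IsSublinearTransition T)
include hT

lemma trans_zero : T 0 = 0 := by
  have := hT.1 0 le_rfl 0
  simpa using this

lemma trans_apply_le [Nonempty X] (f g : BoundedContinuousFunction X ℝ) (x : X) :
    T f x ≤ T g x + ‖f - g‖ := by
  have h1 := hT.2.1 g (f - g) x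
  have h2 : T (f - g) x ≤ ‖f - g‖ := (hT.2.2 (f - g) x).trans (bcf_sup_le_norm _)
  simpa using h1.trans (by linarith)

lemma trans_mono [Nonempty X] {f g : BoundedContinuousFunction X ℝ}
    (hfg : ∀ y, f y ≤ g y) (x : X) : T f x ≤ T g x := by
  have h1 := hT.2.1 g (f - g) x
  have h2 : T (f - g) x ≤ 0 := by
    refine (hT.2.2 (f - g) x).trans (ciSup_le fun y => ?_)
    simp only [BoundedContinuousFunction.coe_sub, Pi.sub_apply]
    linarith [hfg y]
  have h3 : g + (f - g) = f := by ext y; simp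
  rw [h3] at h1
  linarith

lemma trans_norm_lip [Nonempty X] (f g : BoundedContinuousFunction X ℝ) :
    ‖T f - T g‖ ≤ ‖f - g‖ := by
  rw [BoundedContinuousFunction.norm_le (norm_nonneg _)]
  intro x
  rw [Real.norm_eq_abs, abs_le]
  have h1 := trans_apply_le hT f g x
  have h2 := trans_apply_le hT g f x
  rw [norm_sub_rev g f] at h2
  simp only [BoundedContinuousFunction.coe_sub, Pi.sub_apply]
  constructor <;> linarith

lemma trans_norm_le [Nonempty X] (f : BoundedContinuousFunction X ℝ) : ‖T f‖ ≤ ‖f‖ := by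
  have := trans_norm_lip hT f 0
  simpa [trans_zero hT] using this

lemma trans_comp [Nonempty X] (hS : IsSublinearTransition S) :
    IsSublinearTransition (T ∘ S) := by
  refine ⟨fun c hc f => ?_, fun f g x => ?_, fun f x => ?_⟩
  · simp only [Function.comp_apply, hS.1 c hc, hT.1 c hc]
  · have h1 : T (S (f + g)) x ≤ T (S f + S g) x :=
      trans_mono hT (fun y => hS.2.1 f g y) x
    exact h1.trans (hT.2.1 (S f) (S g) x)
  · exact (hT.2.2 (S f) x).trans (ciSup_le fun y => (hS.2.2 f y).trans le_rfl)

lemma trans_iterate [Nonempty X] (n : ℕ) : IsSublinearTransition (T^[n]) := by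
  induction n with
  | zero =>
    refine ⟨fun c hc f => rfl, fun f g x => ?_, fun f x => bcf_le_sup f x⟩
    simp
  | succ n ih =>
    rw [Function.iterate_succ']
    exact trans_comp hT ih

end Trans

section Rate
variable {Q : Op X} (hQ : IsSublinearRate Q)

lemma norm_apply_le_opSemiNorm (A : Op X) (hA : opSemiNorm A ≠ ⊤) (hA0 : A 0 = 0)
    (f : BoundedContinuousFunction X ℝ) : ‖A f‖ ≤ (opSemiNorm A).toReal * ‖f‖ := by
  rcases eq_or_ne f 0 with rfl | hf
  · simp [hA0]
  · have h1 : (‖A f‖₊ : ℝ≥0∞) / (‖f‖₊ : ℝ≥0∞) ≤ opSemiNorm A :=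
      le_iSup₂ (f := fun f _ => (‖A f‖₊ : ℝ≥0∞) / (‖f‖₊ : ℝ≥0∞)) f hf
    have hf' : (‖f‖₊ : ℝ≥0∞) ≠ 0 := by simpa using hf
    have h2 : (‖A f‖₊ : ℝ≥0∞) ≤ opSemiNorm A * ‖f‖₊ := by
      rwa [ENNReal.div_le_iff hf' (by simp)] at h1
    have h3 : ((‖A f‖₊ : ℝ≥0∞)).toReal ≤ (opSemiNorm A * ‖f‖₊).toReal :=
      ENNReal.toReal_mono (ENNReal.mul_ne_top hA (by simp)) h2
    simpa [ENNReal.toReal_mul] using h3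

lemma opSemiNorm_le_ofReal (A : Op X) (C : ℝ) (hC : 0 ≤ C)
    (h : ∀ f, ‖A f‖ ≤ C * ‖f‖) : opSemiNorm A ≤ ENNReal.ofReal C := by
  refine iSup₂_le fun f hf => ?_
  have hf' : (‖f‖₊ : ℝ≥0∞) ≠ 0 := by simpa using hf
  rw [ENNReal.div_le_iff hf' (by simp)]
  calc (‖A f‖₊ : ℝ≥0∞) ≤ ((C.toNNReal * ‖f‖₊ : ℝ≥0) : ℝ≥0∞) := by
        rw [ENNReal.coe_le_coe, ← NNReal.coe_le_coe]
        push_cast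
        simpa [Real.coe_toNNReal _ hC] using h f
    _ = ENNReal.ofReal C * ‖f‖₊ := by
        rw [ENNReal.coe_mul, ENNReal.ofReal]

include hQ

lemma rate_zero : Q 0 = 0 := by
  have := hQ.1 0 le_rfl 0
  simpa using this

lemma rate_norm (hQb : opSemiNorm Q ≠ ⊤) (f : BoundedContinuousFunction X ℝ) :
    ‖Q f‖ ≤ (opSemiNorm Q).toReal * ‖f‖ :=
  norm_apply_le_opSemiNorm Q hQb (rate_zero hQ) f

lemma rate_translate (f : BoundedContinuousFunction X ℝ) (c : ℝ) :
    Q (f + BoundedContinuousFunction.const X c) = Q f := by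
  ext x
  apply le_antisymm
  · have h1 := hQ.2.1 f (BoundedContinuousFunction.const X c) x
    simpa [hQ.2.2.1 c] using h1
  · have h1 := hQ.2.1 (f + BoundedContinuousFunction.const X c)
      (BoundedContinuousFunction.const X (-c)) x
    have h2 : f + BoundedContinuousFunction.const X c
        + BoundedContinuousFunction.const X (-c) = f := by
      ext y; simp
    rw [h2] at h1
    simpa [hQ.2.2.1 (-c)] using h1

lemma rate_apply_le (f g : BoundedContinuousFunction X ℝ) (x : X) :
    Q f x ≤ Q g x + Q (f - g) x := by
  have h1 := hQ.2.1 g (f - g) x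
  simpa using h1

lemma rate_norm_lip (hQb : opSemiNorm Q ≠ ⊤) (f g : BoundedContinuousFunction X ℝ) :
    ‖Q f - Q g‖ ≤ (opSemiNorm Q).toReal * ‖f - g‖ := by
  rw [BoundedContinuousFunction.norm_le (by positivity)]
  intro x
  rw [Real.norm_eq_abs, abs_le]
  constructor
  · have h1 := rate_apply_le hQ g f x
    have h2 : Q (g - f) x ≤ (opSemiNorm Q).toReal * ‖f - g‖ := by
      calc Q (g - f) x ≤ ‖Q (g - f)‖ := bcf_apply_le_norm _ x
        _ ≤ (opSemiNorm Q).toReal * ‖g - f‖ := rate_norm hQ hQb _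
        _ = (opSemiNorm Q).toReal * ‖f - g‖ := by rw [norm_sub_rev]
    simp only [BoundedContinuousFunction.coe_sub, Pi.sub_apply]
    linarith
  · have h1 := rate_apply_le hQ f g x
    have h2 : Q (f - g) x ≤ (opSemiNorm Q).toReal * ‖f - g‖ := by
      calc Q (f - g) x ≤ ‖Q (f - g)‖ := bcf_apply_le_norm _ x
        _ ≤ (opSemiNorm Q).toReal * ‖f - g‖ := rate_norm hQ hQb _
    simp only [BoundedContinuousFunction.coe_sub, Pi.sub_apply]
    linarith

lemma rate_pmp [DiscreteTopology X] [Nonempty X] (hQb : opSemiNorm Q ≠ ⊤)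
    (f : BoundedContinuousFunction X ℝ) (x : X) :
    Q f x ≤ (opSemiNorm Q).toReal * ((⨆ y, f y) - f x) := by
  set K := (opSemiNorm Q).toReal with hKdef
  have hK0 : 0 ≤ K := ENNReal.toReal_nonneg
  set c := ⨆ y, f y with hcdef
  have hfc : f x ≤ c := bcf_le_sup f x
  refine le_of_forall_pos_le_add fun δ hδ => ?_
  set a : ℝ := c - f x + δ / (K + 1) with hadef
  have hdpos : 0 < δ / (K + 1) := by positivity
  have ha0 : 0 < a := by simp only [hadef]; linarith
  set g := f + BoundedContinuousFunction.const X (-c) + a • indic x with hgdef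
  have hgy : ∀ y, g y = f y - c + a * indic x y := by
    intro y
    simp [hgdef, sub_eq_add_neg]
  have hix : indic x x = 1 := by
    simp [indic, BoundedContinuousFunction.coe_ofNormedAddCommGroup]
  have hgx : g x = δ / (K + 1) := by rw [hgy, hix, hadef]; ring
  have hgle : ∀ y, g y ≤ g x := by
    intro y
    by_cases hy : y = x
    · subst hy; exact le_rfl
    · have hiy : indic x y = 0 := by
        simp [indic, BoundedContinuousFunction.coe_ofNormedAddCommGroup,
          Set.indicator_apply, hy]
      rw [hgy y, hgx, hiy]
      have : f y ≤ c := bcf_le_sup f y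
      linarith
  have hsup : (⨆ y, g y) = g x := le_antisymm (ciSup_le hgle) (bcf_le_sup g x)
  have hgx0 : 0 ≤ g x := by rw [hgx]; positivity
  have hQg : Q g x ≤ 0 := hQ.2.2.2 g x hsup hgx0
  have hdecomp : f + BoundedContinuousFunction.const X (-c) = g + (-(a • indic x)) := by
    rw [hgdef]; abel
  have h1 : Q (f + BoundedContinuousFunction.const X (-c)) x
      ≤ Q g x + Q (-(a • indic x)) x := by
    have := hQ.2.1 g (-(a • indic x)) x
    rw [← hdecomp] at this
    exact this
  have h2 : Q (f + BoundedContinuousFunction.const X (-c)) = Q f := rate_translate hQ f (-c)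
  have h3 : Q (-(a • indic x)) x ≤ K * a := by
    calc Q (-(a • indic x)) x ≤ ‖Q (-(a • indic x))‖ := bcf_apply_le_norm _ x
      _ ≤ K * ‖-(a • indic x)‖ := rate_norm hQ hQb _
      _ ≤ K * a := by
          refine mul_le_mul_of_nonneg_left ?_ hK0
          rw [norm_neg]
          have hns : ‖a • indic x‖ = |a| * ‖indic x‖ := norm_smul a (indic x)
          rw [hns, abs_of_pos ha0]
          calc a * ‖indic x‖ ≤ a * 1 :=
                mul_le_mul_of_nonneg_left (indic_norm_le x) ha0.le
            _ = a := mul_one a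
  have hKd : K * (δ / (K + 1)) ≤ δ := by
    rw [mul_div_assoc']
    rw [div_le_iff₀ (by linarith)]
    nlinarith
  rw [h2] at h1
  calc Q f x ≤ 0 + K * a := by linarith
    _ = K * (c - f x) + K * (δ / (K + 1)) := by rw [hadef]; ring
    _ ≤ K * (c - f x) + δ := by linarith

omit hQ in
lemma step_apply (h : ℝ) (f : BoundedContinuousFunction X ℝ) (x : X) :
    stepOp Q h f x = f x + h * Q f x := by
  simp [stepOp]

omit hQ in
lemma euler_eq_step (t : ℝ) (n : ℕ) : euler Q t n = (stepOp Q (t / (n : ℝ)))^[n] := rfl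

lemma step_trans [DiscreteTopology X] [Nonempty X] (hQb : opSemiNorm Q ≠ ⊤)
    {h : ℝ} (h0 : 0 ≤ h) (h1 : h * (opSemiNorm Q).toReal ≤ 1) :
    IsSublinearTransition (stepOp Q h) := by
  refine ⟨fun c hc f => ?_, fun f g x => ?_, fun f x => ?_⟩
  · unfold stepOp
    rw [hQ.1 c hc]
    ext y
    simp
    ring
  · have h2 := hQ.2.1 f g x
    have h3 : h * Q (f + g) x ≤ h * (Q f x + Q g x) := mul_le_mul_of_nonneg_left h2 h0
    simp only [step_apply, BoundedContinuousFunction.coe_add, Pi.add_apply]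
    linarith
  · have hp := rate_pmp hQ hQb f x
    have h2 : h * Q f x ≤ h * ((opSemiNorm Q).toReal * ((⨆ y, f y) - f x)) :=
      mul_le_mul_of_nonneg_left hp h0
    have h3 := bcf_le_sup f x
    rw [step_apply]
    nlinarith

lemma step_iter_norm_le [DiscreteTopology X] [Nonempty X] (hQb : opSemiNorm Q ≠ ⊤)
    {h : ℝ} (h0 : 0 ≤ h) (h1 : h * (opSemiNorm Q).toReal ≤ 1) (k : ℕ)
    (f : BoundedContinuousFunction X ℝ) : ‖(stepOp Q h)^[k] f‖ ≤ ‖f‖ :=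
  trans_norm_le (trans_iterate (step_trans hQ hQb h0 h1) k) f

lemma step_iter_dist [DiscreteTopology X] [Nonempty X] (hQb : opSemiNorm Q ≠ ⊤)
    {h : ℝ} (h0 : 0 ≤ h) (h1 : h * (opSemiNorm Q).toReal ≤ 1) (k : ℕ)
    (f : BoundedContinuousFunction X ℝ) :
    ‖(stepOp Q h)^[k] f - f‖ ≤ (k : ℝ) * (h * (opSemiNorm Q).toReal) * ‖f‖ := by
  set K := (opSemiNorm Q).toReal with hKdef
  have hK0 : 0 ≤ K := ENNReal.toReal_nonneg
  induction k with
  | zero => simp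
  | succ k ih =>
    set g := (stepOp Q h)^[k] f with hgdef
    have hstep : (stepOp Q h)^[k + 1] f = g + h • Q g := by
      rw [Function.iterate_succ_apply']
      rfl
    have h2 : ‖(stepOp Q h)^[k + 1] f - f‖ ≤ ‖h • Q g‖ + ‖g - f‖ := by
      rw [hstep]
      have : g + h • Q g - f = h • Q g + (g - f) := by abel
      rw [this]
      exact norm_add_le _ _
    have h3 : ‖h • Q g‖ ≤ h * (K * ‖g‖) := by
      have hns : ‖h • Q g‖ = |h| * ‖Q g‖ := by
        rw [norm_smul h (Q g), Real.norm_eq_abs]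
      rw [hns, abs_of_nonneg h0]
      exact mul_le_mul_of_nonneg_left (rate_norm hQ hQb g) h0
    have h4 : ‖g‖ ≤ ‖f‖ := step_iter_norm_le hQ hQb h0 h1 k f
    have h5 : 0 ≤ ‖f‖ := norm_nonneg f
    push_cast
    nlinarith [mul_le_mul_of_nonneg_left h4 (mul_nonneg h0 hK0), h2, h3, ih]

lemma step_taylor [DiscreteTopology X] [Nonempty X] (hQb : opSemiNorm Q ≠ ⊤)
    {h : ℝ} (h0 : 0 ≤ h) (h1 : h * (opSemiNorm Q).toReal ≤ 1) (k : ℕ)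
    (f : BoundedContinuousFunction X ℝ) :
    ‖(stepOp Q h)^[k] f - (f + ((k : ℝ) * h) • Q f)‖
      ≤ (k : ℝ)^2 * (h * (opSemiNorm Q).toReal)^2 * ‖f‖ := by
  set K := (opSemiNorm Q).toReal with hKdef
  have hK0 : 0 ≤ K := ENNReal.toReal_nonneg
  induction k with
  | zero => simp
  | succ k ih =>
    set g := (stepOp Q h)^[k] f with hgdef
    have hstep : (stepOp Q h)^[k + 1] f = g + h • Q g := by
      rw [Function.iterate_succ_apply']
      rfl
    have hsplit : (((k : ℕ) + 1 : ℕ) : ℝ) * h = (k : ℝ) * h + h := by push_cast; ring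
    have hgoal : (stepOp Q h)^[k + 1] f - (f + ((((k : ℕ) + 1 : ℕ) : ℝ) * h) • Q f)
        = (g - (f + ((k : ℝ) * h) • Q f)) + (h • Q g - h • Q f) := by
      rw [hstep, hsplit, add_smul]
      abel
    have h2 : ‖(stepOp Q h)^[k + 1] f - (f + ((((k : ℕ) + 1 : ℕ) : ℝ) * h) • Q f)‖
        ≤ ‖g - (f + ((k : ℝ) * h) • Q f)‖ + ‖h • Q g - h • Q f‖ := by
      rw [hgoal]
      exact norm_add_le _ _
    have h3 : ‖h • Q g - h • Q f‖ ≤ h * (K * ‖g - f‖) := by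
      have hsub : h • Q g - h • Q f = h • (Q g - Q f) := (smul_sub h _ _).symm
      have hns : ‖h • (Q g - Q f)‖ = |h| * ‖Q g - Q f‖ := by
        rw [norm_smul h (Q g - Q f), Real.norm_eq_abs]
      rw [hsub, hns, abs_of_nonneg h0]
      exact mul_le_mul_of_nonneg_left (rate_norm_lip hQ hQb g f) h0
    have h4 : ‖g - f‖ ≤ (k : ℝ) * (h * K) * ‖f‖ := step_iter_dist hQ hQb h0 h1 k f
    have h5 : 0 ≤ ‖f‖ := norm_nonneg f
    have h6 : 0 ≤ (k : ℝ) := Nat.cast_nonneg k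
    have h7 : 0 ≤ h * K := mul_nonneg h0 hK0
    push_cast at h2 ⊢
    push_cast at ih
    nlinarith [mul_le_mul_of_nonneg_left h4 (mul_nonneg h0 hK0),
      mul_nonneg (mul_nonneg h6 (mul_nonneg h7 h7)) h5,
      mul_nonneg (mul_nonneg h7 h7) h5, h2, h3, ih]


omit hQ in
lemma iter_cmp (S T : Op X) (hS : ∀ f g, ‖S f - S g‖ ≤ ‖f - g‖)
    (hTn : ∀ f, ‖T f‖ ≤ ‖f‖) (C : ℝ) (hC : 0 ≤ C)
    (hST : ∀ g, ‖S g - T g‖ ≤ C * ‖g‖) (n : ℕ) (f : BoundedContinuousFunction X ℝ) :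
    ‖S^[n] f - T^[n] f‖ ≤ (n : ℝ) * C * ‖f‖ := by
  have hTk : ∀ m (f : BoundedContinuousFunction X ℝ), ‖T^[m] f‖ ≤ ‖f‖ := by
    intro m
    induction m with
    | zero => intro f; simp
    | succ m ih =>
      intro f
      rw [Function.iterate_succ_apply']
      exact (hTn _).trans (ih f)
  induction n with
  | zero => simp
  | succ n ih =>
    have h1 : ‖S^[n + 1] f - T^[n + 1] f‖
        ≤ ‖S (S^[n] f) - S (T^[n] f)‖ + ‖S (T^[n] f) - T (T^[n] f)‖ := by
      rw [Function.iterate_succ_apply' S, Function.iterate_succ_apply' T]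
      have := dist_triangle (S (S^[n] f)) (S (T^[n] f)) (T (T^[n] f))
      simpa [dist_eq_norm] using this
    have h2 : ‖S (S^[n] f) - S (T^[n] f)‖ ≤ ‖S^[n] f - T^[n] f‖ := hS _ _
    have h3 : ‖S (T^[n] f) - T (T^[n] f)‖ ≤ C * ‖T^[n] f‖ := hST _
    have h4 : C * ‖T^[n] f‖ ≤ C * ‖f‖ := mul_le_mul_of_nonneg_left (hTk n f) hC
    push_cast
    linarith

lemma euler_trans [DiscreteTopology X] [Nonempty X] (hQb : opSemiNorm Q ≠ ⊤)
    {t : ℝ} (ht : 0 ≤ t) {n : ℕ} (hn : 1 ≤ n) (hnK : t * (opSemiNorm Q).toReal ≤ n) :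
    IsSublinearTransition (euler Q t n) := by
  rw [euler_eq_step]
  have hnpos : (0 : ℝ) < n := by exact_mod_cast hn
  have h0 : 0 ≤ t / (n : ℝ) := div_nonneg ht hnpos.le
  have h1 : (t / (n : ℝ)) * (opSemiNorm Q).toReal ≤ 1 := by
    rw [div_mul_eq_mul_div, div_le_one hnpos]
    exact hnK
  exact trans_iterate (step_trans hQ hQb h0 h1) n

lemma euler_mul_est [DiscreteTopology X] [Nonempty X] (hQb : opSemiNorm Q ≠ ⊤)
    {t : ℝ} (ht : 0 ≤ t) {k n : ℕ} (hk : 1 ≤ k) (hn : 1 ≤ n)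
    (hnK : t * (opSemiNorm Q).toReal ≤ n) (f : BoundedContinuousFunction X ℝ) :
    ‖euler Q t (k * n) f - euler Q t n f‖
      ≤ (t ^ 2 * (opSemiNorm Q).toReal ^ 2 / n) * ‖f‖ := by
  set K := (opSemiNorm Q).toReal with hKdef
  have hK0 : 0 ≤ K := ENNReal.toReal_nonneg
  have hkpos : (0 : ℝ) < k := by exact_mod_cast hk
  have hnpos : (0 : ℝ) < n := by exact_mod_cast hn
  set h : ℝ := t / ((k : ℝ) * (n : ℝ)) with hhdef
  have hcast : ((k * n : ℕ) : ℝ) = (k : ℝ) * (n : ℝ) := by push_cast; ring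
  have heq1 : euler Q t (k * n) = ((stepOp Q h)^[k])^[n] := by
    rw [euler_eq_step, hcast, ← Function.iterate_mul]
  have hkh : (k : ℝ) * h = t / n := by
    rw [hhdef]
    field_simp
  have h0 : 0 ≤ h := div_nonneg ht (by positivity)
  have htn0 : 0 ≤ t / (n : ℝ) := div_nonneg ht hnpos.le
  have htn1 : (t / (n : ℝ)) * K ≤ 1 := by
    rw [div_mul_eq_mul_div, div_le_one hnpos]
    exact hnK
  have h1 : h * K ≤ 1 := by
    have hle : h ≤ t / n := by
      rw [hhdef]
      apply div_le_div_of_nonneg_left ht (by positivity)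
      have hk1 : (1 : ℝ) ≤ (k : ℝ) := by exact_mod_cast hk
      nlinarith [hk1, hnpos]
    calc h * K ≤ (t / n) * K := mul_le_mul_of_nonneg_right hle hK0
      _ ≤ 1 := htn1
  have hstep : IsSublinearTransition (stepOp Q h) := step_trans hQ hQb h0 h1
  have hstep' : IsSublinearTransition (stepOp Q (t / (n : ℝ))) := step_trans hQ hQb htn0 htn1
  have hS : ∀ f g, ‖(stepOp Q h)^[k] f - (stepOp Q h)^[k] g‖ ≤ ‖f - g‖ :=
    fun f g => trans_norm_lip (trans_iterate hstep k) f g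
  have hTn : ∀ f, ‖stepOp Q (t / (n : ℝ)) f‖ ≤ ‖f‖ := fun f => trans_norm_le hstep' f
  have hST : ∀ g, ‖(stepOp Q h)^[k] g - stepOp Q (t / (n : ℝ)) g‖
      ≤ ((k : ℝ) ^ 2 * (h * K) ^ 2) * ‖g‖ := by
    intro g
    have := step_taylor hQ hQb h0 h1 k g
    have hT : stepOp Q (t / (n : ℝ)) g = g + ((k : ℝ) * h) • Q g := by
      rw [stepOp, hkh]
    rw [hT]
    calc ‖(stepOp Q h)^[k] g - (g + ((k : ℝ) * h) • Q g)‖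
        ≤ (k : ℝ) ^ 2 * (h * K) ^ 2 * ‖g‖ := this
      _ = ((k : ℝ) ^ 2 * (h * K) ^ 2) * ‖g‖ := by ring
  have hmain := iter_cmp ((stepOp Q h)^[k]) (stepOp Q (t / (n : ℝ))) hS hTn
    ((k : ℝ) ^ 2 * (h * K) ^ 2) (by positivity) hST n f
  rw [heq1, euler_eq_step]
  refine hmain.trans ?_
  have hval : (n : ℝ) * ((k : ℝ) ^ 2 * (h * K) ^ 2) = t ^ 2 * K ^ 2 / n := by
    rw [hhdef]
    field_simp
  rw [hval]

lemma euler_cauchy_est [DiscreteTopology X] [Nonempty X] (hQb : opSemiNorm Q ≠ ⊤)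
    {t : ℝ} (ht : 0 ≤ t) {m n : ℕ} (hm : 1 ≤ m) (hn : 1 ≤ n)
    (hmK : t * (opSemiNorm Q).toReal ≤ m)
    (hnK : t * (opSemiNorm Q).toReal ≤ n) (f : BoundedContinuousFunction X ℝ) :
    ‖euler Q t m f - euler Q t n f‖
      ≤ (t ^ 2 * (opSemiNorm Q).toReal ^ 2) * (1 / m + 1 / n) * ‖f‖ := by
  set K := (opSemiNorm Q).toReal with hKdef
  have h1 : ‖euler Q t (n * m) f - euler Q t m f‖ ≤ (t ^ 2 * K ^ 2 / m) * ‖f‖ :=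
    euler_mul_est hQ hQb ht hn hm hmK f
  have h2 : ‖euler Q t (m * n) f - euler Q t n f‖ ≤ (t ^ 2 * K ^ 2 / n) * ‖f‖ :=
    euler_mul_est hQ hQb ht hm hn hnK f
  rw [Nat.mul_comm m n] at h2
  have h3 : ‖euler Q t m f - euler Q t n f‖
      ≤ ‖euler Q t (n * m) f - euler Q t m f‖ + ‖euler Q t (n * m) f - euler Q t n f‖ := by
    have htri := dist_triangle (euler Q t m f) (euler Q t (n * m) f) (euler Q t n f)
    rw [dist_eq_norm, dist_eq_norm, dist_eq_norm, norm_sub_rev (euler Q t m f) (euler Q t (n * m) f)] at htri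
    exact htri
  calc ‖euler Q t m f - euler Q t n f‖
      ≤ (t ^ 2 * K ^ 2 / m) * ‖f‖ + (t ^ 2 * K ^ 2 / n) * ‖f‖ := by linarith
    _ = (t ^ 2 * K ^ 2) * (1 / m + 1 / n) * ‖f‖ := by ring

lemma step_smul (h c : ℝ) (hc : 0 ≤ c) (f : BoundedContinuousFunction X ℝ) :
    stepOp Q h (c • f) = c • stepOp Q h f := by
  unfold stepOp
  rw [hQ.1 c hc]
  ext y
  simp
  ring

lemma step_iter_smul (h : ℝ) (m : ℕ) (c : ℝ) (hc : 0 ≤ c)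
    (f : BoundedContinuousFunction X ℝ) :
    (stepOp Q h)^[m] (c • f) = c • (stepOp Q h)^[m] f := by
  induction m with
  | zero => simp
  | succ m ih =>
    rw [Function.iterate_succ_apply', Function.iterate_succ_apply', ih, step_smul hQ h c hc]

lemma euler_smul {t : ℝ} (n : ℕ) (c : ℝ) (hc : 0 ≤ c) (f : BoundedContinuousFunction X ℝ) :
    euler Q t n (c • f) = c • euler Q t n f := by
  exact step_iter_smul hQ (t / (n : ℝ)) n c hc f

omit hQ in
lemma opSemiNorm_sub_comm (A B : Op X) : opSemiNorm (A - B) = opSemiNorm (B - A) := by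
  unfold opSemiNorm
  refine iSup_congr fun f => iSup_congr fun _ => ?_
  have : ‖(A - B) f‖₊ = ‖(B - A) f‖₊ := by
    have h1 : (A - B) f = -((B - A) f) := by
      simp only [Pi.sub_apply]
      abel
    rw [h1, nnnorm_neg]
  rw [this]

omit hQ in
lemma opSemiNorm_tri (A B C : Op X) :
    opSemiNorm (A - B) ≤ opSemiNorm (A - C) + opSemiNorm (C - B) := by
  refine iSup₂_le fun f hf => ?_
  have h1 : (‖(A - B) f‖₊ : ℝ≥0∞) ≤ (‖(A - C) f‖₊ : ℝ≥0∞) + ‖(C - B) f‖₊ := by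
    have h2 : (A - B) f = (A - C) f + (C - B) f := by
      simp only [Pi.sub_apply]
      abel
    rw [h2]
    exact_mod_cast nnnorm_add_le _ _
  calc (‖(A - B) f‖₊ : ℝ≥0∞) / ‖f‖₊
      ≤ ((‖(A - C) f‖₊ : ℝ≥0∞) + ‖(C - B) f‖₊) / ‖f‖₊ := ENNReal.div_le_div_right h1 _
    _ = (‖(A - C) f‖₊ : ℝ≥0∞) / ‖f‖₊ + (‖(C - B) f‖₊ : ℝ≥0∞) / ‖f‖₊ :=
        ENNReal.div_add_div_same.symm
    _ ≤ opSemiNorm (A - C) + opSemiNorm (C - B) :=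
        add_le_add
          (le_iSup₂ (f := fun f (_ : f ≠ 0) => (‖(A - C) f‖₊ : ℝ≥0∞) / ‖f‖₊) f hf)
          (le_iSup₂ (f := fun f (_ : f ≠ 0) => (‖(C - B) f‖₊ : ℝ≥0∞) / ‖f‖₊) f hf)

end Rate

end Aux

theorem stmt_7 {X : Type*} [Countable X] [TopologicalSpace X] [DiscreteTopology X]
    (Q : Op X) (hQ : IsSublinearRate Q) (hQb : opSemiNorm Q ≠ ⊤)
    (t : ℝ) (ht : 0 ≤ t) :
    (∀ ε : ℝ≥0∞, 0 < ε → ∃ N : ℕ, ∀ m ≥ N, ∀ n ≥ N,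
        opSemiNorm (euler Q t m - euler Q t n) < ε) ∧
    ∃ E : Op X, IsSublinearTransition E ∧
      Tendsto (fun n => opSemiNorm (euler Q t n - E)) atTop (nhds 0) := by
  rcases isEmpty_or_nonempty X with hX | hX
  · have hsub : ∀ f g : BoundedContinuousFunction X ℝ, f = g := fun f g => by
      ext x
      exact isEmptyElim x
    have hzero : ∀ A : Op X, opSemiNorm A = 0 := fun A =>
      le_antisymm (iSup₂_le fun f hf => absurd (hsub f 0) hf) zero_le
    refine ⟨fun ε hε => ⟨0, fun m _ n _ => ?_⟩, id,
      ⟨fun c hc f => rfl, fun f g x => isEmptyElim x, fun f x => isEmptyElim x⟩, ?_⟩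
    · rw [hzero]
      exact hε
    · simp only [hzero]
      exact tendsto_const_nhds
  · set K := (opSemiNorm Q).toReal with hKdef
    have hK0 : 0 ≤ K := ENNReal.toReal_nonneg
    set C : ℝ := t ^ 2 * K ^ 2 with hCdef
    have hC0 : 0 ≤ C := by positivity
    obtain ⟨N₀, hN₀⟩ := exists_nat_ge (t * K)
    set N₁ := max N₀ 1 with hN₁def
    have hN₁1 : 1 ≤ N₁ := le_max_right _ _
    have hN₁K : t * K ≤ (N₁ : ℝ) := hN₀.trans (by exact_mod_cast le_max_left N₀ 1)
    have key : ∀ m n : ℕ, N₁ ≤ m → N₁ ≤ n → ∀ f : BoundedContinuousFunction X ℝ,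
        ‖euler Q t m f - euler Q t n f‖ ≤ C * (1 / m + 1 / n) * ‖f‖ := by
      intro m n hm hn f
      have hm1 : 1 ≤ m := hN₁1.trans hm
      have hn1 : 1 ≤ n := hN₁1.trans hn
      have hmK : t * K ≤ (m : ℝ) := hN₁K.trans (by exact_mod_cast hm)
      have hnK : t * K ≤ (n : ℝ) := hN₁K.trans (by exact_mod_cast hn)
      exact euler_cauchy_est hQ hQb ht hm1 hn1 hmK hnK f
    have htrans : ∀ n : ℕ, N₁ ≤ n → IsSublinearTransition (euler Q t n) := by
      intro n hn
      exact euler_trans hQ hQb ht (hN₁1.trans hn)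
        (hN₁K.trans (by exact_mod_cast hn))
    have hlim : ∀ f : BoundedContinuousFunction X ℝ,
        ∃ g, Tendsto (fun n => euler Q t n f) atTop (nhds g) := by
      intro f
      apply cauchySeq_tendsto_of_complete
      rw [Metric.cauchySeq_iff']
      intro ε hε
      obtain ⟨M, hM⟩ := exists_nat_gt (C * 2 * ‖f‖ / ε)
      refine ⟨max N₁ (M + 1), fun n hn => ?_⟩
      set N := max N₁ (M + 1) with hNdef
      have hNN₁ : N₁ ≤ N := le_max_left _ _
      have hNM : M + 1 ≤ N := le_max_right _ _
      have hNR : (M : ℝ) + 1 ≤ (N : ℝ) := by exact_mod_cast hNM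
      have hM0 : (0 : ℝ) ≤ M := Nat.cast_nonneg M
      have hNpos : (0 : ℝ) < N := by linarith
      have hnR : (N : ℝ) ≤ (n : ℝ) := by exact_mod_cast hn
      have hnpos : (0 : ℝ) < n := lt_of_lt_of_le hNpos hnR
      rw [dist_eq_norm]
      have h1 := key n N (hNN₁.trans hn) hNN₁ f
      have h2 : 1 / (n : ℝ) ≤ 1 / (N : ℝ) := one_div_le_one_div_of_le hNpos hnR
      have h3a : 1 / (n : ℝ) + 1 / (N : ℝ) ≤ 2 / (N : ℝ) := by
        rw [show (2 : ℝ) / (N : ℝ) = 1 / (N : ℝ) + 1 / (N : ℝ) by ring]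
        linarith
      have h3 : C * (1 / (n : ℝ) + 1 / (N : ℝ)) * ‖f‖ ≤ C * (2 / (N : ℝ)) * ‖f‖ :=
        mul_le_mul_of_nonneg_right (mul_le_mul_of_nonneg_left h3a hC0) (norm_nonneg f)
      have h5 : C * 2 * ‖f‖ < (M : ℝ) * ε := (div_lt_iff₀ hε).1 hM
      have h6 : (M : ℝ) * ε ≤ (N : ℝ) * ε :=
        mul_le_mul_of_nonneg_right (by linarith) hε.le
      have h4 : C * (2 / (N : ℝ)) * ‖f‖ < ε := by
        have heq : C * (2 / (N : ℝ)) * ‖f‖ = C * 2 * ‖f‖ / (N : ℝ) := by ring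
        rw [heq, div_lt_iff₀ hNpos]
        calc C * 2 * ‖f‖ < (M : ℝ) * ε := h5
          _ ≤ (N : ℝ) * ε := h6
          _ = ε * (N : ℝ) := mul_comm _ _
      linarith
    choose E hE using hlim
    have hEx : ∀ (f : BoundedContinuousFunction X ℝ) (x : X),
        Tendsto (fun n => euler Q t n f x) atTop (nhds (E f x)) := fun f x =>
      ((continuous_eval_const x).tendsto (E f)).comp (hE f)
    have htail : ∀ n : ℕ, N₁ ≤ n → ∀ f : BoundedContinuousFunction X ℝ,
        ‖euler Q t n f - E f‖ ≤ C * (1 / (n : ℝ)) * ‖f‖ := by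
      intro n hn f
      have h1 : Tendsto (fun m => ‖euler Q t n f - euler Q t m f‖) atTop
          (nhds ‖euler Q t n f - E f‖) := ((hE f).const_sub _).norm
      have h2 : Tendsto (fun m : ℕ => C * (1 / (n : ℝ) + 1 / (m : ℝ)) * ‖f‖) atTop
          (nhds (C * (1 / (n : ℝ) + 0) * ‖f‖)) :=
        ((tendsto_const_nhds.add tendsto_one_div_atTop_nhds_zero_nat).const_mul _).mul_const _
      have h3 := le_of_tendsto_of_tendsto h1 h2
        (eventually_atTop.2 ⟨N₁, fun m hm => key n m hn hm f⟩)
      simpa using h3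
    have hTend : Tendsto (fun n => opSemiNorm (euler Q t n - E)) atTop (nhds 0) := by
      have hr : Tendsto (fun n : ℕ => C * (1 / (n : ℝ))) atTop (nhds 0) := by
        simpa using tendsto_one_div_atTop_nhds_zero_nat.const_mul C
      refine tendsto_of_tendsto_of_tendsto_of_le_of_le' tendsto_const_nhds
        (by simpa using ENNReal.tendsto_ofReal hr)
        (Eventually.of_forall fun n => zero_le)
        (eventually_atTop.2 ⟨N₁, fun n hn => ?_⟩)
      refine opSemiNorm_le_ofReal _ _ (by positivity) fun f => ?_
      have := htail n hn f
      rw [one_div] at this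
      exact this
    refine ⟨?_, E, ⟨?_, ?_, ?_⟩, hTend⟩
    · intro ε hε
      have hε2 : 0 < ε / 2 := ENNReal.half_pos hε.ne'
      obtain ⟨N, hN⟩ := eventually_atTop.1 (hTend.eventually (gt_mem_nhds hε2))
      refine ⟨N, fun m hm n hn => ?_⟩
      have hsymm : opSemiNorm (E - euler Q t n) = opSemiNorm (euler Q t n - E) :=
        opSemiNorm_sub_comm _ _
      calc opSemiNorm (euler Q t m - euler Q t n)
          ≤ opSemiNorm (euler Q t m - E) + opSemiNorm (E - euler Q t n) :=
            opSemiNorm_tri _ _ E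
        _ < ε / 2 + ε / 2 := by
            rw [hsymm]
            exact ENNReal.add_lt_add (hN m hm) (hN n hn)
        _ = ε := ENNReal.add_halves ε
    · intro c hc f
      have h2 : Tendsto (fun n => euler Q t n (c • f)) atTop (nhds (c • E f)) :=
        ((hE f).const_smul c).congr fun n => (euler_smul hQ n c hc f).symm
      exact tendsto_nhds_unique (hE (c • f)) h2
    · intro f g x
      refine le_of_tendsto_of_tendsto (hEx (f + g) x) ((hEx f x).add (hEx g x))
        (eventually_atTop.2 ⟨N₁, fun n hn => ?_⟩)
      exact (htrans n hn).2.1 f g x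
    · intro f x
      refine le_of_tendsto (hEx f x) (eventually_atTop.2 ⟨N₁, fun n hn => ?_⟩)
      exact (htrans n hn).2.2 f x
end

section
/- Let Q be a bounded sublinear rate operator on ℬ. Then for all real Δ ≥ 0 with Δ·‖Q‖ ≤ 2 and all ℓ ∈ ℕ, ‖(I + (Δ/ℓ)Q)^ℓ − (I + ΔQ)‖ ≤ Δ²·‖Q‖², where ‖·‖ denotes the operator seminorm and (I + (Δ/ℓ)Q)^ℓ is the ℓ-fold composition. -/
open Filter Topology BoundedContinuousFunction ENNReal NNReal

section Aux

open BoundedContinuousFunction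

variable {X : Type*} [TopologicalSpace X]

lemma aux_Q_zero (Q : Op X) (h1 : ∀ (c : ℝ), 0 ≤ c → ∀ f, Q (c • f) = c • Q f) :
    Q 0 = 0 := by
  have := h1 0 le_rfl 0
  simpa using this

lemma aux_norm_Q_le (Q : Op X) (hQb : opSemiNorm Q ≠ ⊤)
    (h1 : ∀ (c : ℝ), 0 ≤ c → ∀ f, Q (c • f) = c • Q f) (f : BoundedContinuousFunction X ℝ) :
    ‖Q f‖ ≤ (opSemiNorm Q).toReal * ‖f‖ := by
  by_cases hf : f = 0
  · simp [hf, aux_Q_zero Q h1]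
  · have h : ((‖Q f‖₊ : ℝ≥0∞) / (‖f‖₊ : ℝ≥0∞)) ≤ opSemiNorm Q :=
      le_iSup₂ (f := fun g (_ : g ≠ 0) => (‖Q g‖₊ : ℝ≥0∞) / (‖g‖₊ : ℝ≥0∞)) f hf
    have hfn : (‖f‖₊ : ℝ≥0∞) ≠ 0 := by simpa [nnnorm_eq_zero] using hf
    rw [ENNReal.div_le_iff hfn (by simp)] at h
    have := ENNReal.toReal_mono (by finiteness) h
    rw [ENNReal.toReal_mul] at this
    simpa using this

lemma aux_sublip (Q : Op X) (h2 : ∀ f g, ∀ x, Q (f + g) x ≤ Q f x + Q g x)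
    (f g : BoundedContinuousFunction X ℝ) (x : X) :
    Q f x ≤ Q g x + Q (f - g) x := by
  have := h2 g (f - g) x
  rwa [add_sub_cancel] at this

variable [DiscreteTopology X]

lemma aux_indic_apply_self (x : X) : indic x x = 1 := by
  simp [indic, BoundedContinuousFunction.coe_ofNormedAddCommGroup]

lemma aux_indic_apply_ne {x y : X} (h : y ≠ x) : indic x y = 0 := by
  simp [indic, BoundedContinuousFunction.coe_ofNormedAddCommGroup, Set.indicator_apply, h]

lemma aux_norm_indic_le (x : X) : ‖indic x‖ ≤ 1 :=
  BoundedContinuousFunction.norm_ofNormedAddCommGroup_le _ zero_le_one _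

lemma aux_pmp_bound (Q : Op X) (hQb : opSemiNorm Q ≠ ⊤) (hQ : IsSublinearRate Q)
    (f : BoundedContinuousFunction X ℝ) (x : X) :
    Q f x ≤ (opSemiNorm Q).toReal * ((⨆ y, f y) - f x) := by
  obtain ⟨h1, h2, h3, h4⟩ := hQ
  set M : ℝ := (opSemiNorm Q).toReal with hM
  have hM0 : 0 ≤ M := ENNReal.toReal_nonneg
  set c : ℝ := ⨆ y, f y with hc
  have hbdd : BddAbove (Set.range fun y => f y) := by
    refine ⟨‖f‖, ?_⟩
    rintro _ ⟨y, rfl⟩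
    exact le_of_abs_le (f.norm_coe_le_norm y)
  have hfxc : f x ≤ c := le_ciSup hbdd x
  refine le_of_forall_pos_le_add ?_
  intro δ hδ
  set ε : ℝ := δ / (M + 1) with hε
  have hε0 : 0 < ε := by positivity
  set a : ℝ := c - f x + ε with ha
  have ha0 : 0 ≤ a := by simp only [ha]; linarith
  set b : ℝ := ‖f‖ with hb
  set g : BoundedContinuousFunction X ℝ :=
    f + a • indic x + BoundedContinuousFunction.const X b with hg
  have hgy : ∀ y, g y = f y + a * indic x y + b := by
    intro y; simp [hg]
  have hgx : g x = c + ε + b := by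
    rw [hgy x, aux_indic_apply_self, ha]; ring
  have hgle : ∀ y, g y ≤ g x := by
    intro y
    rcases eq_or_ne y x with rfl | hyx
    · exact le_rfl
    · rw [hgy y, aux_indic_apply_ne hyx, hgx]
      have := le_ciSup hbdd y
      simp only [← hc] at this
      linarith
  have _ : Nonempty X := ⟨x⟩
  have hgsup : (⨆ y, g y) = g x := by
    refine le_antisymm (ciSup_le hgle) (le_ciSup ⟨g x, ?_⟩ x)
    rintro _ ⟨y, rfl⟩; exact hgle y
  have hgpos : 0 ≤ g x := by
    rw [hgx]
    have : -‖f‖ ≤ f x := neg_le_of_abs_le (f.norm_coe_le_norm x)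
    simp only [hb]; linarith
  have hQg : Q g x ≤ 0 := h4 g x hgsup hgpos
  have step1 : Q f x ≤ Q g x + Q (f - g) x := aux_sublip Q h2 f g x
  have hfg : f - g = (-(a • indic x)) + BoundedContinuousFunction.const X (-b) := by
    ext y; simp [hg]; ring
  have step2 : Q (f - g) x ≤ Q (-(a • indic x)) x + Q (BoundedContinuousFunction.const X (-b)) x := by
    rw [hfg]; exact h2 _ _ x
  have step3 : Q (BoundedContinuousFunction.const X (-b)) x = 0 := by rw [h3]; rfl
  have step4 : Q (-(a • indic x)) x ≤ M * a := by
    have hn : ‖-(a • indic x)‖ ≤ a := by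
      rw [norm_neg]
      calc ‖a • indic x‖ ≤ ‖a‖ * ‖indic x‖ := le_of_eq (by exact norm_smul a (indic x))
        _ ≤ a * 1 := by
            rw [Real.norm_eq_abs, abs_of_nonneg ha0]
            exact mul_le_mul_of_nonneg_left (aux_norm_indic_le x) ha0
        _ = a := mul_one a
    have h5 : Q (-(a • indic x)) x ≤ ‖Q (-(a • indic x))‖ :=
      le_of_abs_le ((Q _).norm_coe_le_norm x)
    calc Q (-(a • indic x)) x ≤ M * ‖-(a • indic x)‖ :=
          h5.trans (aux_norm_Q_le Q hQb h1 _)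
      _ ≤ M * a := mul_le_mul_of_nonneg_left hn hM0
  have hMε : M * ε ≤ δ := by
    have hne : M + 1 ≠ 0 := by positivity
    have h1' : ε * (M + 1) = δ := by rw [hε]; field_simp
    nlinarith [hε0.le, hM0]
  have hfin : Q f x ≤ M * a := by linarith
  calc Q f x ≤ M * a := hfin
    _ = M * (c - f x) + M * ε := by rw [ha]; ring
    _ ≤ M * (c - f x) + δ := by linarith

lemma aux_nonexp (Q : Op X) (hQb : opSemiNorm Q ≠ ⊤) (hQ : IsSublinearRate Q)
    {h : ℝ} (hh : 0 ≤ h) (hM1 : h * (opSemiNorm Q).toReal ≤ 1)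
    (f : BoundedContinuousFunction X ℝ) :
    ‖f + h • Q f‖ ≤ ‖f‖ := by
  set M : ℝ := (opSemiNorm Q).toReal with hM
  have hM0 : 0 ≤ M := ENNReal.toReal_nonneg
  rw [BoundedContinuousFunction.norm_le (norm_nonneg f)]
  intro x
  have _ : Nonempty X := ⟨x⟩
  have happ : (f + h • Q f) x = f x + h * Q f x := by simp
  rw [happ, Real.norm_eq_abs, abs_le]
  have hbdd : BddAbove (Set.range fun y => f y) :=
    ⟨‖f‖, by rintro _ ⟨y, rfl⟩; exact le_of_abs_le (f.norm_coe_le_norm y)⟩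
  have hbdd' : BddAbove (Set.range fun y => (-f) y) :=
    ⟨‖f‖, by rintro _ ⟨y, rfl⟩
             simp only [BoundedContinuousFunction.coe_neg, Pi.neg_apply]
             exact neg_le_of_neg_le (neg_le_of_abs_le (f.norm_coe_le_norm y))⟩
  set c : ℝ := ⨆ y, f y with hc
  set c' : ℝ := ⨆ y, (-f) y with hc'
  have hcle : c ≤ ‖f‖ := ciSup_le fun y => le_of_abs_le (f.norm_coe_le_norm y)
  have hc'le : c' ≤ ‖f‖ := ciSup_le fun y => by
    simp only [BoundedContinuousFunction.coe_neg, Pi.neg_apply]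
    exact neg_le_of_neg_le (neg_le_of_abs_le (f.norm_coe_le_norm y))
  have hfx : f x ≤ c := le_ciSup hbdd x
  have hfx' : -f x ≤ c' := by
    have := le_ciSup hbdd' x
    simpa [hc'] using this
  have hfxn : -‖f‖ ≤ f x := neg_le_of_abs_le (f.norm_coe_le_norm x)
  have hfxp : f x ≤ ‖f‖ := le_of_abs_le (f.norm_coe_le_norm x)
  have hpmp : Q f x ≤ M * (c - f x) := aux_pmp_bound Q hQb hQ f x
  have hpmp' : Q (-f) x ≤ M * (c' + f x) := by
    have := aux_pmp_bound Q hQb hQ (-f) x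
    simpa [hc'] using this
  have hQneg : 0 ≤ Q f x + Q (-f) x := by
    have := hQ.2.1 f (-f) x
    rw [add_neg_cancel, aux_Q_zero Q hQ.1] at this
    simpa using this
  constructor
  · -- lower bound
    have l1 : h * Q (-f) x ≤ h * (M * (c' + f x)) :=
      mul_le_mul_of_nonneg_left hpmp' hh
    have l2 : h * M * (c' + f x) ≤ 1 * (c' + f x) :=
      mul_le_mul_of_nonneg_right hM1 (by linarith)
    nlinarith
  · -- upper bound
    have u1 : h * Q f x ≤ h * (M * (c - f x)) :=
      mul_le_mul_of_nonneg_left hpmp hh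
    have u2 : h * M * (c - f x) ≤ 1 * (c - f x) :=
      mul_le_mul_of_nonneg_right hM1 (by linarith)
    nlinarith

lemma aux_lip (Q : Op X) (hQb : opSemiNorm Q ≠ ⊤) (hQ : IsSublinearRate Q)
    (f g : BoundedContinuousFunction X ℝ) :
    ‖Q f - Q g‖ ≤ (opSemiNorm Q).toReal * ‖f - g‖ := by
  set M : ℝ := (opSemiNorm Q).toReal with hM
  have hM0 : 0 ≤ M := ENNReal.toReal_nonneg
  rw [BoundedContinuousFunction.norm_le (by positivity)]
  intro x
  rw [Real.norm_eq_abs, abs_le]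
  have hsub : (Q f - Q g) x = Q f x - Q g x := by simp
  have key : ∀ u v : BoundedContinuousFunction X ℝ, Q u x - Q v x ≤ M * ‖u - v‖ := by
    intro u v
    have h1 : Q u x ≤ Q v x + Q (u - v) x := aux_sublip Q hQ.2.1 u v x
    have h2 : Q (u - v) x ≤ ‖Q (u - v)‖ := le_of_abs_le ((Q _).norm_coe_le_norm x)
    have h3 : ‖Q (u - v)‖ ≤ M * ‖u - v‖ := aux_norm_Q_le Q hQb hQ.1 _
    linarith
  constructor
  · have := key g f
    rw [norm_sub_rev] at this
    rw [hsub]; linarith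
  · rw [hsub]; exact key f g

end Aux

theorem stmt_9 {X : Type*} [Countable X] [TopologicalSpace X] [DiscreteTopology X]
    (Q : Op X) (hQ : IsSublinearRate Q) (hQb : opSemiNorm Q ≠ ⊤) :
    ∀ Δ : ℝ, 0 ≤ Δ → ENNReal.ofReal Δ * opSemiNorm Q ≤ 2 →
      ∀ l : ℕ, 1 ≤ l →
        opSemiNorm (euler Q Δ l - (fun f => f + Δ • Q f))
          ≤ ENNReal.ofReal Δ ^ 2 * opSemiNorm Q ^ 2 := by
  intro Δ hΔ hΔQ l hl
  set M : ℝ := (opSemiNorm Q).toReal with hMdef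
  have hM0 : 0 ≤ M := ENNReal.toReal_nonneg
  have hΔM : Δ * M ≤ 2 := by
    have h2top : (2 : ℝ≥0∞) ≠ ⊤ := by norm_num
    have := ENNReal.toReal_mono h2top hΔQ
    rw [ENNReal.toReal_mul, ENNReal.toReal_ofReal hΔ] at this
    simpa using this
  have key : ∀ f : BoundedContinuousFunction X ℝ,
      ‖euler Q Δ l f - (f + Δ • Q f)‖ ≤ (Δ ^ 2 * M ^ 2) * ‖f‖ := by
    intro f
    rcases eq_or_lt_of_le hl with h1 | h2
    · -- l = 1 : the two operators agree
      have h1' : l = 1 := h1.symm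
      subst h1'
      have : euler Q Δ 1 f = f + Δ • Q f := by
        simp [euler, Function.iterate_one]
      rw [this, sub_self, norm_zero]
      positivity
    · -- l ≥ 2
      have hl2 : (2 : ℝ) ≤ (l : ℝ) := by exact_mod_cast h2
      have hl0 : (0 : ℝ) < (l : ℝ) := by linarith
      set h : ℝ := Δ / (l : ℝ) with hhdef
      have hh : 0 ≤ h := div_nonneg hΔ hl0.le
      have hM1 : h * M ≤ 1 := by
        rw [hhdef, div_mul_eq_mul_div, div_le_one hl0]
        linarith
      set T : Op X := fun g => g + h • Q g with hTdef
      have heuler : euler Q Δ l f = T^[l] f := rfl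
      have P1 : ∀ k, ‖T^[k] f‖ ≤ ‖f‖ := by
        intro k
        induction k with
        | zero => simp
        | succ k ih =>
          rw [Function.iterate_succ_apply']
          exact (aux_nonexp Q hQb hQ hh hM1 (T^[k] f)).trans ih
      have P2 : ∀ k, ‖T^[k] f - f‖ ≤ (k : ℝ) * (h * M) * ‖f‖ := by
        intro k
        induction k with
        | zero => simp
        | succ k ih =>
          rw [Function.iterate_succ_apply']
          have heq : T (T^[k] f) - f = (T^[k] f - f) + h • Q (T^[k] f) := by
            show (T^[k] f + h • Q (T^[k] f)) - f = _
            abel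
          rw [heq]
          have hn : ‖h • Q (T^[k] f)‖ ≤ h * M * ‖f‖ := by
            have e1 : ‖h • Q (T^[k] f)‖ = |h| * ‖Q (T^[k] f)‖ := by
              exact norm_smul h (Q (T^[k] f))
            rw [e1, abs_of_nonneg hh]
            have := aux_norm_Q_le Q hQb hQ.1 (T^[k] f)
            have h3 : ‖Q (T^[k] f)‖ ≤ M * ‖f‖ :=
              this.trans (mul_le_mul_of_nonneg_left (P1 k) hM0)
            calc h * ‖Q (T^[k] f)‖ ≤ h * (M * ‖f‖) :=
                  mul_le_mul_of_nonneg_left h3 hh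
              _ = h * M * ‖f‖ := by ring
          calc ‖(T^[k] f - f) + h • Q (T^[k] f)‖
              ≤ ‖T^[k] f - f‖ + ‖h • Q (T^[k] f)‖ := norm_add_le _ _
            _ ≤ (k : ℝ) * (h * M) * ‖f‖ + h * M * ‖f‖ := add_le_add ih hn
            _ = ((k : ℝ) + 1) * (h * M) * ‖f‖ := by ring
            _ = ((k + 1 : ℕ) : ℝ) * (h * M) * ‖f‖ := by push_cast; ring
      have P3 : ∀ k, ‖T^[k] f - (f + ((k : ℝ) * h) • Q f)‖
          ≤ ((k : ℝ) ^ 2 / 2) * (h * M) ^ 2 * ‖f‖ := by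
        intro k
        induction k with
        | zero => simp
        | succ k ih =>
          have heq : T^[k + 1] f - (f + (((k : ℕ) + 1 : ℝ) * h) • Q f)
              = (T^[k] f - (f + ((k : ℝ) * h) • Q f)) + h • (Q (T^[k] f) - Q f) := by
            rw [Function.iterate_succ_apply']
            show (T^[k] f + h • Q (T^[k] f)) - _ = _
            rw [add_mul, one_mul, add_smul, smul_sub]
            abel
          have hn : ‖h • (Q (T^[k] f) - Q f)‖ ≤ (k : ℝ) * (h * M) ^ 2 * ‖f‖ := by
            have e1 : ‖h • (Q (T^[k] f) - Q f)‖ = |h| * ‖Q (T^[k] f) - Q f‖ := by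
              exact norm_smul h (Q (T^[k] f) - Q f)
            rw [e1, abs_of_nonneg hh]
            have hlip : ‖Q (T^[k] f) - Q f‖ ≤ M * ‖T^[k] f - f‖ :=
              aux_lip Q hQb hQ (T^[k] f) f
            have h4 : ‖Q (T^[k] f) - Q f‖ ≤ M * ((k : ℝ) * (h * M) * ‖f‖) :=
              hlip.trans (mul_le_mul_of_nonneg_left (P2 k) hM0)
            calc h * ‖Q (T^[k] f) - Q f‖ ≤ h * (M * ((k : ℝ) * (h * M) * ‖f‖)) :=
                  mul_le_mul_of_nonneg_left h4 hh
              _ = (k : ℝ) * (h * M) ^ 2 * ‖f‖ := by ring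
          have step : ‖T^[k + 1] f - (f + (((k : ℕ) + 1 : ℝ) * h) • Q f)‖
              ≤ ((k : ℝ) ^ 2 / 2) * (h * M) ^ 2 * ‖f‖ + (k : ℝ) * (h * M) ^ 2 * ‖f‖ := by
            rw [heq]
            exact (norm_add_le _ _).trans (add_le_add ih hn)
          have harith : ((k : ℝ) ^ 2 / 2) * (h * M) ^ 2 * ‖f‖ + (k : ℝ) * (h * M) ^ 2 * ‖f‖
              ≤ (((k : ℕ) + 1 : ℝ) ^ 2 / 2) * (h * M) ^ 2 * ‖f‖ := by
            push_cast
            nlinarith [mul_nonneg (sq_nonneg (h * M)) (norm_nonneg f)]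
          have hcast : (((k + 1 : ℕ) : ℝ)) = ((k : ℕ) + 1 : ℝ) := by push_cast; ring
          rw [hcast]
          exact step.trans harith
      have hfinal := P3 l
      have hlh : (l : ℝ) * h = Δ := by
        rw [hhdef]; field_simp
      rw [hlh] at hfinal
      rw [heuler]
      refine hfinal.trans ?_
      have : ((l : ℝ) ^ 2 / 2) * (h * M) ^ 2 = (Δ ^ 2 * M ^ 2) / 2 := by
        rw [← hlh]; ring
      rw [this]
      nlinarith [mul_nonneg (mul_nonneg (sq_nonneg Δ) (sq_nonneg M)) (norm_nonneg f)]
  -- wrap up in ℝ≥0∞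
  have hC : (0 : ℝ) ≤ Δ ^ 2 * M ^ 2 := by positivity
  have hle : opSemiNorm (euler Q Δ l - (fun f => f + Δ • Q f))
      ≤ ENNReal.ofReal (Δ ^ 2 * M ^ 2) := by
    apply iSup₂_le
    intro f hf
    have hfn : (‖f‖₊ : ℝ≥0∞) ≠ 0 := by simpa [nnnorm_eq_zero] using hf
    rw [ENNReal.div_le_iff hfn (by simp)]
    have happ : (euler Q Δ l - (fun f => f + Δ • Q f)) f
        = euler Q Δ l f - (f + Δ • Q f) := rfl
    have h5 : (‖(euler Q Δ l - (fun f => f + Δ • Q f)) f‖₊ : ℝ≥0∞)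
        ≤ ENNReal.ofReal ((Δ ^ 2 * M ^ 2) * ‖f‖) := by
      rw [← ((ofReal_norm _).trans (enorm_eq_nnnorm _)), happ]
      exact ENNReal.ofReal_le_ofReal (key f)
    rw [ENNReal.ofReal_mul hC, ((ofReal_norm _).trans (enorm_eq_nnnorm _))] at h5
    exact h5
  refine hle.trans (le_of_eq ?_)
  rw [ENNReal.ofReal_mul (by positivity), ENNReal.ofReal_pow hΔ, ENNReal.ofReal_pow hM0,
    ENNReal.ofReal_toReal hQb]
end
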